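/- As formal power series, ∑_{n≥0} p̄(n) (−q)ⁿ = 1/φ(q), where φ(q) = ∑_{n∈ℤ} q^{n²}. -/

import Mathlib

open PowerSeries

noncomputable def f (m : ℕ) : PowerSeries ℚ :=
  PowerSeries.mk fun n => PowerSeries.coeff (R := ℚ) n
    (∏ k ∈ Finset.range (n + 1), (1 - (PowerSeries.X : PowerSeries ℚ) ^ (m * (k + 1))))

/-- `phi j` is the theta series `φ(q^j) = ∑_{m ∈ ℤ} q^{j m²}`: the `n`-th
coefficient is the number of integers `m` with `j·m² = n`. -/
noncomputable def phi (j : ℕ) : PowerSeries ℚ :=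
  PowerSeries.mk fun n =>
    ((((Finset.Icc (-(n : ℤ)) (n : ℤ))).filter fun m => (j : ℤ) * m ^ 2 = (n : ℤ)).card : ℚ)

namespace OverPartAux


noncomputable def gb : ℕ → ℕ → PowerSeries ℚ
  | 0, 0 => 1
  | 0, _ + 1 => 0
  | _ + 1, 0 => 1
  | m + 1, r + 1 => X ^ (2 * (r + 1)) * gb m (r + 1) + gb m r

@[simp] lemma gb_zero_succ (r : ℕ) : gb 0 (r + 1) = 0 := rfl

@[simp] lemma gb_zero_right (m : ℕ) : gb m 0 = 1 := by cases m <;> rfl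

lemma gb_succ_succ (m r : ℕ) :
    gb (m + 1) (r + 1) = X ^ (2 * (r + 1)) * gb m (r + 1) + gb m r := rfl

lemma gb_of_lt : ∀ m r : ℕ, m < r → gb m r = 0 := by
  intro m
  induction m with
  | zero => intro r h; match r, h with | r+1, _ => rfl
  | succ m ih =>
    intro r h
    match r, h with
    | r+1, h =>
      rw [gb_succ_succ, ih (r+1) (by omega), ih r (by omega)]
      ring

lemma pow_mul_pow (a b c : ℕ) (h : a + b = c) :
    (X : PowerSeries ℚ) ^ a * X ^ b = X ^ c := by rw [← pow_add, h]

lemma absorb : ∀ m s : ℕ,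
    (1 - X ^ (2 * (s + 1))) * gb m (s + 1) = (1 - X ^ (2 * (m - s))) * gb m s := by
  intro m
  induction m with
  | zero =>
    intro s
    rw [gb_zero_succ]
    cases s with
    | zero => simp
    | succ t => rw [gb_zero_succ]; ring
  | succ m ih =>
    intro s
    by_cases hs : s ≤ m
    · have hCB : (X : PowerSeries ℚ) ^ (2*(s+1)) * X ^ (2*(m-s)) = X ^ (2*(m+1)) :=
        pow_mul_pow _ _ _ (by omega)
      have key : (1 - X ^ (2 * (s + 1))) * gb (m + 1) (s + 1)
          = (1 - X ^ (2 * (m + 1))) * gb m s := by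
        rw [gb_succ_succ]
        linear_combination (X : PowerSeries ℚ) ^ (2*(s+1)) * ih s - gb m s * hCB
      rw [key]
      cases s with
      | zero => simp
      | succ t =>
        have e2 : m + 1 - (t+1) = m - t := by omega
        have hCB2 : (X : PowerSeries ℚ) ^ (2*(t+1)) * X ^ (2*(m-t)) = X ^ (2*(m+1)) :=
          pow_mul_pow _ _ _ (by omega)
        rw [e2, gb_succ_succ]
        linear_combination ih t + gb m (t+1) * hCB2
    · have h1 : gb (m + 1) (s + 1) = 0 := gb_of_lt _ _ (by omega)
      rcases Nat.lt_or_ge (m+1) s with h2 | h2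
      · rw [h1, gb_of_lt _ _ h2]; ring
      · have hs1 : s = m + 1 := by omega
        have h3 : m + 1 - s = 0 := by omega
        rw [h1, h3]; ring_nf

lemma pascalA (m s : ℕ) :
    gb (m + 1) (s + 1) = gb m (s + 1) + X ^ (2 * (m - s)) * gb m s := by
  rw [gb_succ_succ]
  linear_combination - absorb m s

/-- symmetric double-step recurrence -/
lemma symrec (n s : ℕ) :
    gb (2*n+2) (s+2) = X ^ (2*(s+2)) * gb (2*n) (s+2)
      + (1 + X ^ (2*(2*n+1))) * gb (2*n) (s+1) + X ^ (2*(2*n - s)) * gb (2*n) s := by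
  have hB1 : gb (2*n+2) (s+2) = X ^ (2*(s+2)) * gb (2*n+1) (s+2) + gb (2*n+1) (s+1) :=
    gb_succ_succ (2*n+1) (s+1)
  have hA : gb (2*n+1) (s+2) = gb (2*n) (s+2) + X ^ (2*(2*n - (s+1))) * gb (2*n) (s+1) :=
    pascalA (2*n) (s+1)
  have hB2 : gb (2*n+1) (s+1) = X ^ (2*(s+1)) * gb (2*n) (s+1) + gb (2*n) s :=
    gb_succ_succ (2*n) s
  by_cases hs : s + 1 ≤ 2*n
  · have hE : (X : PowerSeries ℚ) ^ (2*(s+2)) * X ^ (2*(2*n - (s+1))) = X ^ (2*(2*n+1)) :=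
      pow_mul_pow _ _ _ (by omega)
    rw [hB1, hA, hB2]
    linear_combination gb (2*n) (s+1) * hE - absorb (2*n) s
  · -- s ≥ 2n : gb (2n) (s+1) = gb (2n) (s+2) = 0
    have z1 : gb (2*n) (s+1) = 0 := gb_of_lt _ _ (by omega)
    have z2 : gb (2*n) (s+2) = 0 := gb_of_lt _ _ (by omega)
    rw [hB1, hA, hB2, z1, z2]
    rcases Nat.lt_or_ge (2*n) s with h2 | h2
    · rw [gb_of_lt (2*n) s h2]; ring
    · have hs2 : s = 2*n := by omega
      subst hs2
      simp

/-- first-column recurrence -/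
lemma rec1 (n : ℕ) :
    gb (2*n+2) 1 = (1 + X ^ (2*(2*n+1))) * gb (2*n) 0 + X ^ 2 * gb (2*n) 1 := by
  have hA : gb (2*n+2) 1 = gb (2*n+1) 1 + X ^ (2*(2*n+1-0)) * gb (2*n+1) 0 := pascalA (2*n+1) 0
  have hB : gb (2*n+1) 1 = X ^ (2*(0+1)) * gb (2*n) 1 + gb (2*n) 0 := gb_succ_succ (2*n) 0
  rw [hA, hB]
  simp; ring




/-- weight exponent -/
def w (j : ℤ) : ℕ := j.natAbs ^ 2

lemma w_cast (j : ℤ) : ((w j : ℕ) : ℤ) = j ^ 2 := by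
  unfold w; push_cast; exact sq_abs j

noncomputable def gbz (m : ℕ) (j : ℤ) : PowerSeries ℚ :=
  if 0 ≤ j then gb m j.toNat else 0

lemma gbz_coe (m : ℕ) (r : ℕ) : gbz m (r : ℤ) = gb m r := by
  simp [gbz]

lemma gbz_neg {m : ℕ} {j : ℤ} (h : j < 0) : gbz m j = 0 := by
  simp [gbz, not_le.mpr h]

lemma gbz_of_gt {m : ℕ} {j : ℤ} (h : (m : ℤ) < j) : gbz m j = 0 := by
  have h0 : 0 ≤ j := by omega
  rw [gbz, if_pos h0]
  exact gb_of_lt m j.toNat (by omega)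

lemma wrecS (n s : ℕ) :
    gb (2*n+2) (s+2) * X ^ w ((s:ℤ)+1-n)
      = (1 + X ^ (2*(2*n+1))) * (gb (2*n) (s+1) * X ^ w ((s:ℤ)+1-n))
      + X ^ (2*n+1) * (gb (2*n) (s+2) * X ^ w ((s:ℤ)+2-n))
      + X ^ (2*n+1) * (gb (2*n) s * X ^ w ((s:ℤ)-n)) := by
  by_cases hs : s ≤ 2*n
  · have e1 : 2*(s+2) + w ((s:ℤ)+1-n) = (2*n+1) + w ((s:ℤ)+2-n) := by
      have h1 := w_cast ((s:ℤ)+1-n); have h2 := w_cast ((s:ℤ)+2-n)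
      have : (↑(2*(s+2) + w ((s:ℤ)+1-n)) : ℤ) = ↑((2*n+1) + w ((s:ℤ)+2-n)) := by
        push_cast [h1, h2]; ring
      exact_mod_cast this
    have e2 : 2*(2*n-s) + w ((s:ℤ)+1-n) = (2*n+1) + w ((s:ℤ)-n) := by
      have h1 := w_cast ((s:ℤ)+1-n); have h2 := w_cast ((s:ℤ)-n)
      have hns : ((2*n-s : ℕ) : ℤ) = 2*(n:ℤ) - s := by omega
      have : (↑(2*(2*n-s) + w ((s:ℤ)+1-n)) : ℤ) = ↑((2*n+1) + w ((s:ℤ)-n)) := by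
        push_cast [h1, h2, hns]; ring
      exact_mod_cast this
    have p1 : (X : PowerSeries ℚ) ^ (2*(s+2)) * X ^ w ((s:ℤ)+1-n)
        = X ^ (2*n+1) * X ^ w ((s:ℤ)+2-n) := by
      rw [← pow_add, ← pow_add, e1]
    have p2 : (X : PowerSeries ℚ) ^ (2*(2*n-s)) * X ^ w ((s:ℤ)+1-n)
        = X ^ (2*n+1) * X ^ w ((s:ℤ)-n) := by
      rw [← pow_add, ← pow_add, e2]
    linear_combination (X : PowerSeries ℚ) ^ w ((s:ℤ)+1-n) * symrec n s
      + gb (2*n) (s+2) * p1 + gb (2*n) s * p2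
  · have z0 : gb (2*n) s = 0 := gb_of_lt _ _ (by omega)
    have z1 : gb (2*n) (s+1) = 0 := gb_of_lt _ _ (by omega)
    have z2 : gb (2*n) (s+2) = 0 := gb_of_lt _ _ (by omega)
    have z3 : gb (2*n+2) (s+2) = 0 := gb_of_lt _ _ (by omega)
    rw [z0, z1, z2, z3]; ring

lemma wrec0 (n : ℕ) :
    gb (2*n+2) 1 * X ^ w (-(n:ℤ))
      = (1 + X ^ (2*(2*n+1))) * (gb (2*n) 0 * X ^ w (-(n:ℤ)))
      + X ^ (2*n+1) * (gb (2*n) 1 * X ^ w (1-(n:ℤ))) := by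
  have e : 2 + w (-(n:ℤ)) = (2*n+1) + w (1-(n:ℤ)) := by
    have h1 := w_cast (-(n:ℤ)); have h2 := w_cast (1-(n:ℤ))
    have : ((2 + w (-(n:ℤ)) : ℕ) : ℤ) = ((2*n+1) + w (1-(n:ℤ)) : ℕ) := by
      push_cast [h1, h2]; ring
    exact_mod_cast this
  have p : (X : PowerSeries ℚ) ^ 2 * X ^ w (-(n:ℤ)) = X ^ (2*n+1) * X ^ w (1-(n:ℤ)) := by
    rw [← pow_add, ← pow_add, e]
  linear_combination (X : PowerSeries ℚ) ^ w (-(n:ℤ)) * rec1 n + gb (2*n) 1 * p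

lemma keyrecz (n : ℕ) (j : ℤ) :
    gbz (2*n+2) ((n:ℤ)+1+j) * X ^ w j
      = (1 + X ^ (2*(2*n+1))) * (gbz (2*n) ((n:ℤ)+j) * X ^ w j)
      + X ^ (2*n+1) * (gbz (2*n) ((n:ℤ)+1+j) * X ^ w (j+1))
      + X ^ (2*n+1) * (gbz (2*n) ((n:ℤ)-1+j) * X ^ w (j-1)) := by
  rcases lt_trichotomy j (-(n:ℤ)-1) with hj | hj | hj
  · rw [gbz_neg (show (n:ℤ)+1+j < 0 by omega), gbz_neg (show (n:ℤ)+j < 0 by omega),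
      gbz_neg (show (n:ℤ)+1+j < 0 by omega), gbz_neg (show (n:ℤ)-1+j < 0 by omega)]
    ring
  · subst hj
    rw [gbz_neg (show (n:ℤ)+(-(n:ℤ)-1) < 0 by omega),
      gbz_neg (show (n:ℤ)-1+(-(n:ℤ)-1) < 0 by omega)]
    have h0 : (n:ℤ)+1+(-(n:ℤ)-1) = ((0:ℕ):ℤ) := by omega
    rw [h0, gbz_coe, gbz_coe, gb_zero_right, gb_zero_right]
    have hw1 : w (-(n:ℤ)-1) = (n+1)^2 := by
      unfold w; congr 1; omega
    have hw2 : w (-(n:ℤ)-1+1) = n^2 := by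
      unfold w; congr 1; omega
    rw [hw1, hw2]
    have p : (X : PowerSeries ℚ) ^ (2*n+1) * X ^ (n^2) = X ^ ((n+1)^2) := by
      rw [← pow_add]; ring_nf
    linear_combination - p
  · -- j ≥ -n
    have hr : ∃ r : ℕ, (n:ℤ) + j = r := ⟨((n:ℤ)+j).toNat, by omega⟩
    obtain ⟨r, hr⟩ := hr
    have hj' : j = (r:ℤ) - n := by omega
    cases r with
    | zero =>
      subst hj'
      rw [gbz_neg (show (n:ℤ)-1+((0:ℕ)-(n:ℤ)) < 0 by push_cast; omega)]
      have h1 : (n:ℤ)+1+(((0:ℕ):ℤ)-n) = ((1:ℕ):ℤ) := by push_cast; ring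
      have h2 : (n:ℤ)+(((0:ℕ):ℤ)-n) = ((0:ℕ):ℤ) := by push_cast; ring
      rw [h1, h2, gbz_coe, gbz_coe, gbz_coe]
      have hw1 : ((0:ℕ):ℤ) - (n:ℤ) = -(n:ℤ) := by push_cast; ring
      have hw2 : ((0:ℕ):ℤ) - (n:ℤ) + 1 = 1 - (n:ℤ) := by push_cast; ring
      rw [hw1]
      rw [show -(n:ℤ) + 1 = 1 - (n:ℤ) from by ring]
      linear_combination wrec0 n
    | succ s =>
      subst hj'
      have h1 : (n:ℤ)+1+(((s+1:ℕ):ℤ)-n) = ((s+2:ℕ):ℤ) := by push_cast; ring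
      have h2 : (n:ℤ)+(((s+1:ℕ):ℤ)-n) = ((s+1:ℕ):ℤ) := by push_cast; ring
      have h3 : (n:ℤ)-1+(((s+1:ℕ):ℤ)-n) = ((s:ℕ):ℤ) := by push_cast; ring
      rw [h1, h2, h3, gbz_coe, gbz_coe, gbz_coe, gbz_coe]
      rw [show ((s+1:ℕ):ℤ) - (n:ℤ) = (s:ℤ)+1-n from by push_cast; ring]
      rw [show (s:ℤ)+1-(n:ℤ)+1 = (s:ℤ)+2-n from by ring]
      rw [show (s:ℤ)+1-(n:ℤ)-1 = (s:ℤ)-n from by ring]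
      linear_combination wrecS n s


noncomputable def S (n : ℕ) : PowerSeries ℚ :=
  ∑ j ∈ Finset.Icc (-(n:ℤ)) (n:ℤ), gbz (2*n) ((n:ℤ)+j) * X ^ w j

lemma S_zero : S 0 = 1 := by
  unfold S
  simp only [Nat.cast_zero, neg_zero, Finset.Icc_self, Finset.sum_singleton]
  rw [show ((0:ℤ)+0) = ((0:ℕ):ℤ) from by ring, gbz_coe, gb_zero_right]
  simp [w]

lemma sum_shift (g : ℤ → PowerSeries ℚ) (a b c : ℤ) :
    ∑ j ∈ Finset.Icc a b, g (j + c) = ∑ i ∈ Finset.Icc (a+c) (b+c), g i := by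
  rw [← Finset.map_add_right_Icc a b c, Finset.sum_map]
  rfl

lemma S_succ (n : ℕ) : S (n+1) = (1 + X ^ (2*n+1))^2 * S n := by
  have hcast : ((n+1:ℕ):ℤ) = (n:ℤ)+1 := by push_cast; ring
  have step1 : S (n+1) = ∑ j ∈ Finset.Icc (-((n:ℤ)+1)) ((n:ℤ)+1),
      gbz (2*n+2) ((n:ℤ)+1+j) * X ^ w j := by
    unfold S
    rw [show 2*(n+1) = 2*n+2 from by ring]
    apply Finset.sum_congr (by rw [hcast])
    intro j _
    rw [hcast]
  rw [step1]
  have step2 : ∑ j ∈ Finset.Icc (-((n:ℤ)+1)) ((n:ℤ)+1), gbz (2*n+2) ((n:ℤ)+1+j) * X ^ w j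
      = ∑ j ∈ Finset.Icc (-((n:ℤ)+1)) ((n:ℤ)+1),
        ((1 + X ^ (2*(2*n+1))) * (gbz (2*n) ((n:ℤ)+j) * X ^ w j)
        + X ^ (2*n+1) * (gbz (2*n) ((n:ℤ)+1+j) * X ^ w (j+1))
        + X ^ (2*n+1) * (gbz (2*n) ((n:ℤ)-1+j) * X ^ w (j-1))) :=
    Finset.sum_congr rfl fun j _ => keyrecz n j
  rw [step2]
  rw [Finset.sum_add_distrib, Finset.sum_add_distrib, ← Finset.mul_sum, ← Finset.mul_sum,
    ← Finset.mul_sum]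
  have hsub : Finset.Icc (-(n:ℤ)) (n:ℤ) ⊆ Finset.Icc (-((n:ℤ)+1)) ((n:ℤ)+1) := by
    apply Finset.Icc_subset_Icc <;> omega
  have hS1 : ∑ j ∈ Finset.Icc (-((n:ℤ)+1)) ((n:ℤ)+1), gbz (2*n) ((n:ℤ)+j) * X ^ w j = S n := by
    rw [S]
    refine (Finset.sum_subset hsub ?_).symm
    intro j hj hnj
    simp only [Finset.mem_Icc] at hj hnj
    have : j = -((n:ℤ)+1) ∨ j = (n:ℤ)+1 := by omega
    rcases this with h | h <;> subst h
    · rw [gbz_neg (by omega)]; ring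
    · rw [gbz_of_gt (by push_cast; omega)]; ring
  have hS2 : ∑ j ∈ Finset.Icc (-((n:ℤ)+1)) ((n:ℤ)+1), gbz (2*n) ((n:ℤ)+1+j) * X ^ w (j+1)
      = S n := by
    have := sum_shift (fun i => gbz (2*n) ((n:ℤ)+i) * X ^ w i) (-((n:ℤ)+1)) ((n:ℤ)+1) 1
    simp only [show ∀ j:ℤ, (n:ℤ) + (j+1) = (n:ℤ)+1+j from fun j => by ring] at this
    rw [this, show -((n:ℤ)+1)+1 = -(n:ℤ) from by ring]
    rw [S]
    refine (Finset.sum_subset (Finset.Icc_subset_Icc (le_refl _) (by omega)) ?_).symm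
    intro i hi hni
    simp only [Finset.mem_Icc] at hi hni
    rw [gbz_of_gt (by omega)]; ring
  have hS3 : ∑ j ∈ Finset.Icc (-((n:ℤ)+1)) ((n:ℤ)+1), gbz (2*n) ((n:ℤ)-1+j) * X ^ w (j-1)
      = S n := by
    have := sum_shift (fun i => gbz (2*n) ((n:ℤ)+i) * X ^ w i) (-((n:ℤ)+1)) ((n:ℤ)+1) (-1)
    simp only [show ∀ j:ℤ, j + (-1:ℤ) = j - 1 from fun j => by ring] at this
    simp only [show ∀ x:ℤ, (n:ℤ) + (x-1) = (n:ℤ)-1+x from fun x => by ring] at this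
    rw [this, show ((n:ℤ)+1-1) = (n:ℤ) from by ring]
    rw [S]
    refine (Finset.sum_subset (Finset.Icc_subset_Icc (by omega) (le_refl _)) ?_).symm
    intro i hi hni
    simp only [Finset.mem_Icc] at hi hni
    rw [gbz_neg (by omega)]; ring
  rw [hS1, hS2, hS3]
  have p : (X : PowerSeries ℚ) ^ (2*(2*n+1)) = X ^ (2*n+1) * X ^ (2*n+1) := by
    rw [← pow_add]; congr 1; omega
  rw [p]; ring

lemma S_prod (n : ℕ) : S n = (∏ k ∈ Finset.range n, (1 + X ^ (2*k+1)))^2 := by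
  induction n with
  | zero => simpa using S_zero
  | succ n ih => rw [S_succ, ih, Finset.prod_range_succ, mul_pow]; ring




/-! ### congruence mod `X^t` -/

lemma coeff_eq_of_dvd {t : ℕ} {A B : PowerSeries ℚ} (h : (X:PowerSeries ℚ)^t ∣ A - B)
    {b : ℕ} (hb : b < t) : coeff b A = coeff b B := by
  have := (PowerSeries.X_pow_dvd_iff.mp h) b hb
  rw [map_sub] at this
  linarith

lemma modC_mul {t : ℕ} {A B : PowerSeries ℚ} (hA : (X:PowerSeries ℚ)^t ∣ A - 1)
    (hB : (X:PowerSeries ℚ)^t ∣ B - 1) : (X:PowerSeries ℚ)^t ∣ A*B - 1 := by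
  have : A*B - 1 = A*(B-1) + (A-1) := by ring
  rw [this]
  exact dvd_add (Dvd.dvd.mul_left hB A) hA

lemma modC_prod {t : ℕ} {α : Type*} (s : Finset α) (u : α → PowerSeries ℚ)
    (h : ∀ a ∈ s, (X:PowerSeries ℚ)^t ∣ u a - 1) :
    (X:PowerSeries ℚ)^t ∣ (∏ a ∈ s, u a) - 1 := by
  classical
  induction s using Finset.induction_on with
  | empty => simp
  | insert _ _ hx ih =>
    rename_i a s'
    rw [Finset.prod_insert hx]
    exact modC_mul (h a (Finset.mem_insert_self a s'))
      (ih fun b hb => h b (Finset.mem_insert_of_mem hb))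

lemma modC_one_sub {t s : ℕ} (h : t ≤ s) : (X:PowerSeries ℚ)^t ∣ (1 - X^s) - 1 := by
  have : (1 - (X:PowerSeries ℚ)^s) - 1 = -(X^s) := by ring
  rw [this]
  exact (pow_dvd_pow X h).neg_right

lemma modC_inv {t : ℕ} {P : PowerSeries ℚ} (h0 : constantCoeff P ≠ 0)
    (h : (X:PowerSeries ℚ)^t ∣ P - 1) : (X:PowerSeries ℚ)^t ∣ P⁻¹ - 1 := by
  have hPP : P * P⁻¹ = 1 := PowerSeries.mul_inv_cancel P h0
  have : P⁻¹ - 1 = -(P⁻¹ * (P - 1)) := by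
    have : P⁻¹ * (P - 1) = P⁻¹ * P - P⁻¹ := by ring
    rw [this, mul_comm P⁻¹ P, hPP]
    ring
  rw [this]
  exact ((Dvd.dvd.mul_left h P⁻¹)).neg_right

/-! ### the products -/

noncomputable def D (M : ℕ) : PowerSeries ℚ := ∏ k ∈ Finset.range M, (1 - X ^ (2*(k+1)))
noncomputable def Hh (M : ℕ) : PowerSeries ℚ := ∏ k ∈ Finset.range M, (1 + X ^ (2*k+1))
noncomputable def G (M : ℕ) : PowerSeries ℚ := ∏ k ∈ Finset.range M, (1 - X ^ (k+1))
noncomputable def T (M : ℕ) : PowerSeries ℚ := ∑ j ∈ Finset.Icc (-(M:ℤ)) (M:ℤ), (X:PowerSeries ℚ) ^ w j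

lemma prodform : ∀ (m r : ℕ), gb m r * ∏ i ∈ Finset.range r, (1 - (X:PowerSeries ℚ) ^ (2*(i+1)))
    = ∏ i ∈ Finset.range r, (1 - (X:PowerSeries ℚ) ^ (2*(m-i))) := by
  intro m r
  induction r with
  | zero => simp [gb_zero_right]
  | succ r ih =>
    rw [Finset.prod_range_succ, Finset.prod_range_succ, ← ih]
    have h := absorb m r
    linear_combination (∏ i ∈ Finset.range r, (1 - (X:PowerSeries ℚ) ^ (2*(i+1)))) * h

lemma D_split {M M' : ℕ} (h : M ≤ M') :
    D M' = D M * ∏ i ∈ Finset.Ico M M', (1 - (X:PowerSeries ℚ) ^ (2*(i+1))) := by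
  rw [D, D]
  simp only [Finset.range_eq_Ico]
  exact (Finset.prod_Ico_consecutive _ (Nat.zero_le M) h).symm

lemma D_stab {M M' b : ℕ} (h : M ≤ M') (hb : b < 2*M+2) :
    coeff b (D M') = coeff b (D M) := by
  rw [D_split h]
  apply coeff_eq_of_dvd (t := 2*M+2) _ hb
  have : D M * (∏ i ∈ Finset.Ico M M', (1 - (X:PowerSeries ℚ) ^ (2*(i+1)))) - D M
      = D M * ((∏ i ∈ Finset.Ico M M', (1 - (X:PowerSeries ℚ) ^ (2*(i+1)))) - 1) := by ring
  rw [this]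
  apply Dvd.dvd.mul_left
  apply modC_prod
  intro i hi
  exact modC_one_sub (by simp only [Finset.mem_Ico] at hi; omega)

lemma G_split {M M' : ℕ} (h : M ≤ M') :
    G M' = G M * ∏ i ∈ Finset.Ico M M', (1 - (X:PowerSeries ℚ) ^ (i+1)) := by
  rw [G, G]
  simp only [Finset.range_eq_Ico]
  exact (Finset.prod_Ico_consecutive _ (Nat.zero_le M) h).symm

lemma G_stab {M M' b : ℕ} (h : M ≤ M') (hb : b < M+1) :
    coeff b (G M') = coeff b (G M) := by
  rw [G_split h]
  apply coeff_eq_of_dvd (t := M+1) _ hb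
  have : G M * (∏ i ∈ Finset.Ico M M', (1 - (X:PowerSeries ℚ) ^ (i+1))) - G M
      = G M * ((∏ i ∈ Finset.Ico M M', (1 - (X:PowerSeries ℚ) ^ (i+1))) - 1) := by ring
  rw [this]
  apply Dvd.dvd.mul_left
  apply modC_prod
  intro i hi
  exact modC_one_sub (by simp only [Finset.mem_Ico] at hi; omega)

lemma constCoeff_one_sub_pow (s : ℕ) (hs : s ≠ 0) :
    constantCoeff (R := ℚ) (1 - X ^ s) = 1 := by
  rw [map_sub, map_one, map_pow, constantCoeff_X, zero_pow hs, sub_zero]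

lemma key_cong (M r : ℕ) (h : r ≤ 2*M) :
    (X:PowerSeries ℚ) ^ (2*(M - Nat.dist r M) + 2) ∣ D M * gb (2*M) r - 1 := by
  rcases le_total r M with hrM | hrM
  · -- r ≤ M ; K = 2r+2
    have hd : M - Nat.dist r M = r := by
      rw [Nat.dist_eq_sub_of_le hrM]; omega
    rw [hd]
    have hsplit : D M = (∏ i ∈ Finset.range r, (1 - (X:PowerSeries ℚ) ^ (2*(i+1))))
        * ∏ i ∈ Finset.Ico r M, (1 - (X:PowerSeries ℚ) ^ (2*(i+1))) := by
      rw [D]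
      simp only [Finset.range_eq_Ico]
      exact (Finset.prod_Ico_consecutive _ (Nat.zero_le r) hrM).symm
    rw [hsplit]
    have : (∏ i ∈ Finset.range r, (1 - (X:PowerSeries ℚ) ^ (2*(i+1))))
        * (∏ i ∈ Finset.Ico r M, (1 - (X:PowerSeries ℚ) ^ (2*(i+1)))) * gb (2*M) r
        = (∏ i ∈ Finset.range r, (1 - (X:PowerSeries ℚ) ^ (2*(2*M-i))))
        * (∏ i ∈ Finset.Ico r M, (1 - (X:PowerSeries ℚ) ^ (2*(i+1)))) := by
      rw [← prodform]; ring
    rw [this]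
    apply modC_mul
    · apply modC_prod; intro i hi
      exact modC_one_sub (by simp only [Finset.mem_range] at hi; omega)
    · apply modC_prod; intro i hi
      exact modC_one_sub (by simp only [Finset.mem_Ico] at hi; omega)
  · -- M ≤ r ; K = 2(2M-r)+2
    have hd : M - Nat.dist r M = 2*M - r := by
      rw [Nat.dist_eq_sub_of_le_right hrM]; omega
    rw [hd]
    set Tl := ∏ i ∈ Finset.Ico M r, (1 - (X:PowerSeries ℚ) ^ (2*(i+1))) with hTl
    have hT0 : constantCoeff Tl ≠ 0 := by
      rw [hTl, map_prod]
      rw [Finset.prod_congr rfl (fun i _ => constCoeff_one_sub_pow (2*(i+1)) (by omega))]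
      simp
    have hDr : D r = D M * Tl := D_split hrM
    have hDgb : D r * gb (2*M) r = ∏ i ∈ Finset.range r, (1 - (X:PowerSeries ℚ) ^ (2*(2*M-i))) := by
      rw [← prodform, D]; ring
    have hmain : D M * gb (2*M) r
        = (∏ i ∈ Finset.range r, (1 - (X:PowerSeries ℚ) ^ (2*(2*M-i)))) * Tl⁻¹ := by
      rw [← hDgb, hDr]
      have hTT : Tl * Tl⁻¹ = 1 := PowerSeries.mul_inv_cancel _ hT0
      linear_combination - (D M * gb (2*M) r) * hTT
    rw [hmain]
    apply modC_mul
    · apply modC_prod; intro i hi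
      exact modC_one_sub (by simp only [Finset.mem_range] at hi; omega)
    · apply modC_inv hT0
      apply modC_prod; intro i hi
      exact modC_one_sub (by simp only [Finset.mem_Ico] at hi; omega)



lemma coeff_DS (M b : ℕ) (hb : b ≤ 2*M) : coeff b (D M * S M) = coeff b (T M) := by
  rw [S, Finset.mul_sum, map_sum, T, map_sum]
  apply Finset.sum_congr rfl
  intro j hj
  simp only [Finset.mem_Icc] at hj
  have hnn : (0:ℤ) ≤ (M:ℤ) + j := by omega
  set r : ℕ := ((M:ℤ)+j).toNat with hrdef
  have hr : (M:ℤ) + j = (r:ℤ) := by omega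
  have hr2M : r ≤ 2*M := by omega
  have habs : j.natAbs ≤ M := by omega
  have hdist : Nat.dist r M = j.natAbs := by
    rcases le_or_gt 0 j with h0 | h0
    · rw [Nat.dist_eq_sub_of_le_right (by omega)]; omega
    · rw [Nat.dist_eq_sub_of_le (by omega)]; omega
  have hgb : gbz (2*M) ((M:ℤ)+j) = gb (2*M) r := by
    rw [gbz, if_pos hnn]
  rw [hgb]
  have hkey := key_cong M r hr2M
  rw [hdist] at hkey
  have hdvd : (X:PowerSeries ℚ) ^ (w j + (2*(M - j.natAbs) + 2)) ∣
      D M * (gb (2*M) r * X ^ w j) - X ^ w j := by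
    have : D M * (gb (2*M) r * X ^ w j) - X ^ w j
        = (D M * gb (2*M) r - 1) * X ^ w j := by ring
    rw [this, pow_add, mul_comm ((X:PowerSeries ℚ) ^ w j)]
    exact mul_dvd_mul hkey dvd_rfl
  have hbK : b < w j + (2*(M - j.natAbs) + 2) := by
    rw [show w j = j.natAbs ^ 2 from rfl]
    have base : 2 * j.natAbs ≤ j.natAbs ^ 2 + 1 := by
      cases j.natAbs with
      | zero => simp
      | succ t => nlinarith
    generalize j.natAbs ^ 2 = sq at base ⊢
    omega
  exact coeff_eq_of_dvd hdvd hbK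

lemma phi_T (a M : ℕ) (h : a ≤ M) : coeff a (phi 1) = coeff a (T M) := by
  rw [phi, coeff_mk, T, map_sum]
  have hco : ∀ j ∈ Finset.Icc (-(M:ℤ)) (M:ℤ),
      coeff a ((X:PowerSeries ℚ) ^ w j) = if a = w j then 1 else 0 :=
    fun j _ => coeff_X_pow a (w j)
  rw [Finset.sum_congr rfl hco, Finset.sum_boole]
  congr 1
  have : ((Finset.Icc (-(a:ℤ)) (a:ℤ)).filter fun m => ((1:ℕ):ℤ) * m ^ 2 = (a:ℤ))
      = ((Finset.Icc (-(M:ℤ)) (M:ℤ)).filter fun j => a = w j) := by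
    ext m
    simp only [Finset.mem_filter, Finset.mem_Icc, Nat.cast_one, one_mul]
    constructor
    · rintro ⟨⟨h1, h2⟩, h3⟩
      have hw : (w m : ℤ) = (a:ℤ) := by rw [w_cast]; exact h3
      have hw' : w m = a := by exact_mod_cast hw
      have hle : m.natAbs ≤ m.natAbs ^ 2 := Nat.le_self_pow (by norm_num) _
      have : m.natAbs ≤ M := by
        have : m.natAbs ^ 2 = a := hw'
        omega
      exact ⟨⟨by omega, by omega⟩, hw'.symm⟩
    · rintro ⟨⟨h1, h2⟩, h3⟩
      have hw : (w m : ℤ) = (a:ℤ) := by exact_mod_cast h3.symm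
      have h4 : m ^ 2 = (a:ℤ) := by rw [← w_cast]; exact hw
      have hle : m.natAbs ≤ m.natAbs ^ 2 := Nat.le_self_pow (by norm_num) _
      have h5 : m.natAbs ^ 2 = a := by
        have := h3.symm
        simpa [w] using this
      refine ⟨⟨by omega, by omega⟩, h4⟩
  rw [this]

lemma f2_coeff (b M : ℕ) (h : b + 1 ≤ M) : coeff b (f 2) = coeff b (D M) := by
  rw [f, coeff_mk]
  have : coeff b (∏ k ∈ Finset.range (b + 1),
      (1 - (X : PowerSeries ℚ) ^ (2 * (k + 1)))) = coeff b (D (b+1)) := by rw [D]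
  rw [this]
  exact (D_stab h (by omega)).symm

lemma f1_coeff (b M : ℕ) (h : b + 1 ≤ M) : coeff b (f 1) = coeff b (G M) := by
  rw [f, coeff_mk]
  simp only [one_mul]
  have : coeff b (∏ k ∈ Finset.range (b + 1),
      (1 - (X : PowerSeries ℚ) ^ (k + 1))) = coeff b (G (b+1)) := by rw [G]
  rw [this]
  exact (G_stab h (by omega)).symm

lemma rescale_one_sub_pow (t : ℕ) :
    rescale (-1:ℚ) (1 - X^t) = 1 - C ((-1:ℚ)^t) * X^t := by
  rw [map_sub, map_one, map_pow, rescale_X, mul_pow, ← map_pow]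

lemma prod_range_two_mul (u : ℕ → PowerSeries ℚ) (M : ℕ) :
    ∏ i ∈ Finset.range (2*M), u i = ∏ k ∈ Finset.range M, (u (2*k) * u (2*k+1)) := by
  induction M with
  | zero => simp
  | succ M ih =>
    rw [show 2*(M+1) = 2*M+1+1 from by ring, Finset.prod_range_succ, Finset.prod_range_succ,
      ih, Finset.prod_range_succ]
    ring

lemma rescale_G (M : ℕ) : rescale (-1:ℚ) (G (2*M)) = Hh M * D M := by
  rw [G, map_prod]
  simp only [rescale_one_sub_pow]
  rw [prod_range_two_mul (fun k => 1 - C ((-1:ℚ)^(k+1)) * X^(k+1)) M]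
  rw [Hh, D, ← Finset.prod_mul_distrib]
  apply Finset.prod_congr rfl
  intro k _
  have h1 : ((-1:ℚ))^(2*k+1) = -1 := Odd.neg_one_pow ⟨k, by ring⟩
  have h2 : ((-1:ℚ))^(2*k+1+1) = 1 := Even.neg_one_pow ⟨k+1, by ring⟩
  simp only [h1, h2, map_one, map_neg, one_mul, neg_mul]
  rw [show 2*(k+1) = 2*k+1+1 from by ring]
  ring

lemma rescale_D (M : ℕ) : rescale (-1:ℚ) (D M) = D M := by
  rw [D, map_prod]
  apply Finset.prod_congr rfl
  intro k _
  rw [rescale_one_sub_pow]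
  have : ((-1:ℚ))^(2*(k+1)) = 1 := Even.neg_one_pow ⟨k+1, by ring⟩
  rw [this, map_one, one_mul]

lemma D_odd {b : ℕ} (M : ℕ) (hodd : Odd b) : coeff b (D M) = 0 := by
  have h := congrArg (coeff (R := ℚ) b) (rescale_D M)
  rw [coeff_rescale, Odd.neg_one_pow hodd] at h
  linarith

lemma central : phi 1 * f 2 = (rescale (-1:ℚ) (f 1))^2 := by
  ext N
  set M := N + 1 with hM
  have hL : coeff N (phi 1 * f 2) = coeff N (T M * D M) := by
    rw [coeff_mul, coeff_mul]
    apply Finset.sum_congr rfl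
    intro pq hpq
    rw [Finset.HasAntidiagonal.mem_antidiagonal] at hpq
    rw [phi_T pq.1 M (by omega), f2_coeff pq.2 M (by omega)]
  have hco : ∀ a, a ≤ N → coeff a (rescale (-1:ℚ) (f 1)) = coeff a (Hh M * D M) := by
    intro a ha
    rw [← rescale_G M, coeff_rescale, coeff_rescale, f1_coeff a (2*M) (by omega)]
  have hR : coeff N ((rescale (-1:ℚ) (f 1))^2) = coeff N ((Hh M * D M)^2) := by
    rw [pow_two, pow_two, coeff_mul, coeff_mul]
    apply Finset.sum_congr rfl
    intro pq hpq
    rw [Finset.HasAntidiagonal.mem_antidiagonal] at hpq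
    rw [hco pq.1 (by omega), hco pq.2 (by omega)]
  rw [hL, hR]
  have hS : (Hh M * D M)^2 = D M * (D M * S M) := by
    rw [S_prod]
    rw [show (∏ k ∈ Finset.range M, (1 + (X:PowerSeries ℚ) ^ (2*k+1))) = Hh M from by rw [Hh]]
    ring
  rw [hS]
  calc coeff N (T M * D M) = coeff N (D M * T M) := by rw [mul_comm]
    _ = coeff N (D M * (D M * S M)) := by
        rw [coeff_mul, coeff_mul]
        apply Finset.sum_congr rfl
        intro pq hpq
        rw [Finset.HasAntidiagonal.mem_antidiagonal] at hpq
        rw [(coeff_DS M pq.2 (by omega))]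


lemma hf1c : constantCoeff (f 1) = 1 := by
  rw [← coeff_zero_eq_constantCoeff_apply, f1_coeff 0 1 le_rfl, G, Finset.prod_range_one]
  simp

lemma hphic : constantCoeff (phi 1) = 1 := by
  rw [phi, constantCoeff_mk]
  norm_num
  rw [Finset.filter_true_of_mem (by simp)]
  simp

theorem final (p : ℕ → ℕ)
    (hp : PowerSeries.mk (fun n => (p n : ℚ)) = f 2 * ((f 1) ^ 2)⁻¹) :
    PowerSeries.mk (fun n => ((-1 : ℚ)) ^ n * (p n : ℚ)) = (phi 1)⁻¹ := by
  have hgc : constantCoeff (rescale (-1:ℚ) (f 1)) = 1 := by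
    rw [← coeff_zero_eq_constantCoeff_apply, coeff_rescale, pow_zero, one_mul,
      coeff_zero_eq_constantCoeff_apply, hf1c]
  have hg2ne : constantCoeff ((rescale (-1:ℚ) (f 1))^2) ≠ 0 := by
    rw [map_pow, hgc]; norm_num
  rw [PowerSeries.eq_inv_iff_mul_eq_one (by rw [hphic]; norm_num)]
  have hmk : PowerSeries.mk (fun n => ((-1 : ℚ)) ^ n * (p n : ℚ))
      = rescale (-1:ℚ) (PowerSeries.mk fun n => (p n : ℚ)) := by
    ext n
    rw [coeff_mk, coeff_rescale, coeff_mk]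
  rw [hmk, hp, map_mul]
  have hf2resc : rescale (-1:ℚ) (f 2) = f 2 := by
    ext n
    rw [coeff_rescale]
    rcases Nat.even_or_odd n with he | ho
    · rw [he.neg_one_pow, one_mul]
    · have h2 : coeff n (f 2) = coeff n (D (n+1)) := f2_coeff n (n+1) le_rfl
      rw [h2, D_odd (n+1) ho, mul_zero]
  have hinv : rescale (-1:ℚ) ((f 1 ^ 2)⁻¹) = ((rescale (-1:ℚ) (f 1))^2)⁻¹ := by
    rw [PowerSeries.eq_inv_iff_mul_eq_one hg2ne, ← map_pow, ← map_mul]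
    have h1 : (f 1 ^ 2)⁻¹ * f 1 ^ 2 = 1 := by
      rw [mul_comm]
      exact PowerSeries.mul_inv_cancel _ (by rw [map_pow, hf1c]; norm_num)
    rw [h1, map_one]
  rw [hf2resc, hinv]
  calc f 2 * ((rescale (-1:ℚ) (f 1))^2)⁻¹ * phi 1
      = (phi 1 * f 2) * ((rescale (-1:ℚ) (f 1))^2)⁻¹ := by ring
    _ = ((rescale (-1:ℚ) (f 1))^2) * ((rescale (-1:ℚ) (f 1))^2)⁻¹ := by rw [central]
    _ = 1 := PowerSeries.mul_inv_cancel _ hg2ne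

end OverPartAux

/-- $\sum_{n\ge 0} \bar p(n)(-q)^n = 1/\varphi(q)$. -/
theorem overpartition_neg_q_inv_phi
    (p : ℕ → ℕ)
    (hp : PowerSeries.mk (fun n => (p n : ℚ)) = f 2 * ((f 1) ^ 2)⁻¹) :
    PowerSeries.mk (fun n => ((-1 : ℚ)) ^ n * (p n : ℚ)) = (phi 1)⁻¹ := by
  exact OverPartAux.final p hp
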